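/- arXiv:2506.00700 — 3 statements merged into one kernel-verified Lean document; each statement's English description precedes it below -/
import Mathlib

section
/- Under the same hypotheses (f concave, g convex, x⋆ a maximizer of f over the feasible set {g ≤ b} with multiplier λ⋆ ≥ 0 such that x⋆ maximizes L(·, λ⋆) over X and complementary slackness holds), for every κ > λ⋆ the set of maximizers of f over {x ∈ X : g(x) ≤ b} equals the set of maximizers of P_κ(x) = f(x) − κ·max{0, g(x) − b} over X. -/
/-- Exactness for convex programs: for κ > λ⋆ the constrained maximizers coincide with
the maximizers of the penalized objective. -/
theorem stmt_1 (n : ℕ) (X : Set (Fin n → ℝ)) (f g : (Fin n → ℝ) → ℝ) (b : ℝ)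
    (hf : ConcaveOn ℝ X f) (hg : ConvexOn ℝ X g)
    (xstar : Fin n → ℝ) (lamstar : ℝ)
    (hxX : xstar ∈ X) (hxfeas : g xstar ≤ b)
    (hxmax : ∀ x ∈ X, g x ≤ b → f x ≤ f xstar)
    (hlam : 0 ≤ lamstar)
    (hLag : ∀ x ∈ X, f x - lamstar * (g x - b) ≤ f xstar - lamstar * (g xstar - b))
    (hcs : lamstar * (g xstar - b) = 0)
    (κ : ℝ) (hκ : lamstar < κ) :
    {x | x ∈ X ∧ g x ≤ b ∧ ∀ y ∈ X, g y ≤ b → f y ≤ f x} =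
      {x | x ∈ X ∧ ∀ y ∈ X,
        f y - κ * max 0 (g y - b) ≤ f x - κ * max 0 (g x - b)} := by
  have key : ∀ y ∈ X, f y - κ * max 0 (g y - b) ≤ f xstar := by
    intro y hy
    have h1 := hLag y hy
    rw [hcs, sub_zero] at h1
    have h2 : lamstar * (g y - b) ≤ κ * max 0 (g y - b) := by
      rcases le_or_gt (g y - b) 0 with h | h
      · rw [max_eq_left h, mul_zero]
        exact mul_nonpos_of_nonneg_of_nonpos hlam h
      · rw [max_eq_right h.le]
        exact mul_le_mul_of_nonneg_right hκ.le h.le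
    linarith
  have hmx : max 0 (g xstar - b) = 0 := max_eq_left (by linarith)
  ext x
  simp only [Set.mem_setOf_eq]
  constructor
  · rintro ⟨hx, hgx, hmax⟩
    refine ⟨hx, fun y hy => ?_⟩
    have h0 : max 0 (g x - b) = 0 := max_eq_left (by linarith)
    have := key y hy
    have := hxmax x hx hgx
    have := hmax xstar hxX hxfeas
    rw [h0, mul_zero, sub_zero]
    linarith
  · rintro ⟨hx, hP⟩
    have hPx := hP xstar hxX
    rw [hmx, mul_zero, sub_zero] at hPx
    have hgx : g x ≤ b := by
      by_contra h
      push_neg at h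
      have hpos : 0 < g x - b := by linarith
      have h1 := hLag x hx
      rw [hcs, sub_zero] at h1
      have h2 : lamstar * (g x - b) < κ * (g x - b) :=
        mul_lt_mul_of_pos_right hκ hpos
      rw [max_eq_right hpos.le] at hPx
      linarith
    have h0 : max 0 (g x - b) = 0 := max_eq_left (by linarith)
    rw [h0, mul_zero, sub_zero] at hPx
    refine ⟨hx, hgx, fun y hy hgy => ?_⟩
    have h1 := hxmax y hy hgy
    linarith [hxmax x hx hgx, hPx]
end

section
/- Let b > 0, δ_B > 0, and let w = u + 1 where u ∈ (−1, 0) solves u·e^u = −e^{−δ_B−1}. Then for all 𝔸 ∈ [0, b): (b − 𝔸)/b − log((b − 𝔸)/b) − 1 ≤ δ_B if and only if 𝔸 ≤ w·b. -/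
private noncomputable def gfun : ℝ → ℝ := fun x => x - Real.log x - 1

private lemma gfun_anti : StrictAntiOn gfun (Set.Ioc 0 1) := by
  apply strictAntiOn_of_deriv_neg (convex_Ioc 0 1)
  · apply ContinuousOn.sub (ContinuousOn.sub continuousOn_id ?_) continuousOn_const
    exact Real.continuousOn_log.mono (fun x hx => ne_of_gt hx.1)
  · intro x hx
    rw [interior_Ioc] at hx
    have h : HasDerivAt gfun (1 - x⁻¹) x :=
      ((hasDerivAt_id x).sub (Real.hasDerivAt_log hx.1.ne')).sub_const 1
    rw [h.deriv]
    have : (1:ℝ) < x⁻¹ := (one_lt_inv₀ hx.1).mpr hx.2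
    linarith

/-- Positive exactness: for `𝔸 ∈ [0, b)` the barrier trust-region constraint is
equivalent to the linear constraint `𝔸 ≤ w·b`. -/
theorem stmt_11 (b δB w : ℝ) (hb : 0 < b) (hδ : 0 < δB)
    (hu : w - 1 ∈ Set.Ioo (-1 : ℝ) 0)
    (huw : (w - 1) * Real.exp (w - 1) = -Real.exp (-δB - 1)) :
    ∀ A ∈ Set.Ico (0 : ℝ) b,
      ((b - A) / b - Real.log ((b - A) / b) - 1 ≤ δB ↔ A ≤ w * b) := by
  intro A hA
  obtain ⟨hA0, hAb⟩ := hA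
  set x := (b - A) / b with hx
  have hxpos : 0 < x := div_pos (by linarith) hb
  have hx1 : x ≤ 1 := by
    rw [div_le_one hb]; linarith
  have hxmem : x ∈ Set.Ioc (0:ℝ) 1 := ⟨hxpos, hx1⟩
  -- x* = 1 - w
  have hw0 : 0 < 1 - w := by have := hu.2; linarith
  have hw1 : 1 - w < 1 := by have := hu.1; linarith
  have hsmem : (1 - w) ∈ Set.Ioc (0:ℝ) 1 := ⟨hw0, hw1.le⟩
  -- g (1-w) = δB
  have hlog : Real.log (1 - w) = -δB - 1 - (w - 1) := by
    have h1 : (1 - w) * Real.exp (w - 1) = Real.exp (-δB - 1) := by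
      have : -((w - 1) * Real.exp (w - 1)) = Real.exp (-δB - 1) := by rw [huw]; ring
      linarith [this]
    have h2 : Real.log ((1 - w) * Real.exp (w - 1)) = -δB - 1 := by
      rw [h1, Real.log_exp]
    rw [Real.log_mul hw0.ne' (Real.exp_ne_zero _), Real.log_exp] at h2
    linarith
  have hgδ : gfun (1 - w) = δB := by
    simp only [gfun, hlog]; ring
  have hxiff : A ≤ w * b ↔ 1 - w ≤ x := by
    rw [hx, le_div_iff₀ hb]
    constructor <;> intro h <;> nlinarith
  have hgoal : gfun x ≤ δB ↔ A ≤ w * b := by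
    rw [hxiff, ← hgδ]
    constructor
    · intro h
      by_contra hc
      push_neg at hc
      exact absurd (gfun_anti hxmem hsmem hc) (not_lt.mpr h)
    · intro h
      exact gfun_anti.antitoneOn hsmem hxmem h
  exact hgoal
end

section
/- Suppose f is concave and g is convex on X, the constrained problem max f subject to g ≤ b has a solution with multiplier λ⋆, and κ > λ⋆. Then every maximizer of P_κ(x) = f(x) − κ·max{0, g(x) − b} over X is feasible, i.e., satisfies g(x) ≤ b (strict penalization of infeasible points: for any x̄ with g(x̄) > b, P_κ(x̄) < P_κ(x⋆)). -/
/-- Strict penalization of infeasible points: for `κ > λ⋆` every infeasible point has a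
strictly smaller penalized value than `x⋆`, hence every maximizer of `P_κ` is feasible. -/
theorem stmt_12 (n : ℕ) (X : Set (Fin n → ℝ)) (f g : (Fin n → ℝ) → ℝ) (b : ℝ)
    (hf : ConcaveOn ℝ X f) (hg : ConvexOn ℝ X g)
    (xstar : Fin n → ℝ) (lamstar : ℝ)
    (hxX : xstar ∈ X) (hxfeas : g xstar ≤ b)
    (hxmax : ∀ x ∈ X, g x ≤ b → f x ≤ f xstar)
    (hlam : 0 ≤ lamstar)
    (hLag : ∀ x ∈ X, f x - lamstar * (g x - b) ≤ f xstar - lamstar * (g xstar - b))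
    (hcs : lamstar * (g xstar - b) = 0)
    (κ : ℝ) (hκ : lamstar < κ) :
    (∀ xbar ∈ X, b < g xbar →
      f xbar - κ * max 0 (g xbar - b) < f xstar - κ * max 0 (g xstar - b)) ∧
    (∀ xbar ∈ X,
      (∀ x ∈ X, f x - κ * max 0 (g x - b) ≤ f xbar - κ * max 0 (g xbar - b)) →
      g xbar ≤ b) := by
  have key : ∀ xbar ∈ X, b < g xbar →
      f xbar - κ * max 0 (g xbar - b) < f xstar - κ * max 0 (g xstar - b) := by
    intro xbar hXb hb
    have h1 : max 0 (g xbar - b) = g xbar - b := max_eq_right (by linarith)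
    have h2 : max 0 (g xstar - b) = 0 := max_eq_left (by linarith)
    have hL := hLag xbar hXb
    rw [h1, h2]
    nlinarith [hLag xbar hXb]
  refine ⟨key, ?_⟩
  intro xbar hXb hmax
  by_contra h
  push_neg at h
  exact absurd (hmax xstar hxX) (not_le.mpr (key xbar hXb h))
end
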